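/- Let p ≥ 1 be an integer. There exists a constant C = C(p) > 0 such that for every family of integrable functions f_{j,k} : 𝕋² × 𝕋² → ℝ indexed by the pairs 1 ≤ j < k ≤ 2p, one has ∫_{(𝕋²)^{2p}} ∏_{1≤j<k≤2p} |f_{j,k}(x_j, x_k)|^{1/(2p−1)} dx₁ ⋯ dx_{2p} ≤ C · ∏_{1≤j<k≤2p} ( ∫_{𝕋²×𝕋²} |f_{j,k}(y,z)| dy dz )^{1/(2p−1)}. -/

import Mathlib

open MeasureTheory
open scoped ENNReal NNReal

instance : Fact (0 < 2 * Real.pi) := ⟨by positivity⟩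

/-- The two-dimensional torus `𝕋² = (ℝ/2πℤ)²` with its Haar (Lebesgue) measure. -/
abbrev Torus2 : Type := AddCircle (2 * Real.pi) × AddCircle (2 * Real.pi)

section Aux

open Finset

variable {X : Type*} [MeasurableSpace X]

/-- Preimages of null sets under evaluation at a pair of distinct coordinates are null. -/
lemma pair_eval_null (μ : Measure X) [IsFiniteMeasure μ] {n : ℕ}
    {j k : Fin n} (hjk : j ≠ k) {N : Set (X × X)} (hN : MeasurableSet N)
    (hN0 : μ.prod μ N = 0) :
    Measure.pi (fun _ : Fin n => μ) ((fun x => (x j, x k)) ⁻¹' N) = 0 := by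
  classical
  have hmeas : Measurable fun x : Fin n → X => (x j, x k) :=
    (measurable_pi_apply j).prodMk (measurable_pi_apply k)
  set c : ℝ≥0∞ := (μ Set.univ) ^ (n - 2) with hc
  haveI : IsFiniteMeasure (c • μ) := by
    constructor
    rw [Measure.smul_apply, smul_eq_mul]
    exact ENNReal.mul_lt_top (ENNReal.pow_lt_top (measure_lt_top μ _))
      (measure_lt_top μ _)
  have hmap : Measure.map (fun x : Fin n → X => (x j, x k)) (Measure.pi fun _ => μ)
      = (c • μ).prod μ := by
    refine (Measure.prod_eq ?_).symm
    intro s t hs ht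
    rw [Measure.map_apply hmeas (hs.prod ht)]
    have hpre : (fun x : Fin n → X => (x j, x k)) ⁻¹' (s ×ˢ t)
        = Set.univ.pi (fun i => if i = j then s else if i = k then t else Set.univ) := by
      ext x
      simp only [Set.mem_preimage, Set.mem_prod, Set.mem_pi, Set.mem_univ, true_implies]
      constructor
      · rintro ⟨h1, h2⟩ i
        by_cases hij : i = j
        · subst hij; simp [if_pos rfl, h1]
        · by_cases hik : i = k
          · subst hik; simp [if_neg hij, h2]
          · simp [hij, hik]
      · intro h
        refine ⟨?_, ?_⟩
        · have := h j; simpa using this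
        · have := h k; simpa [if_neg (Ne.symm hjk)] using this
    rw [hpre, Measure.pi_pi]
    have huniv : (Finset.univ : Finset (Fin n)) = {j, k} ∪ ({j, k} : Finset (Fin n))ᶜ :=
      (Finset.union_compl _).symm
    rw [huniv, Finset.prod_union disjoint_compl_right, Finset.prod_pair hjk]
    have h1 : (if j = j then s else if j = k then t else Set.univ) = s := by simp
    have h2 : (if k = j then s else if k = k then t else Set.univ) = t := by
      simp [if_neg (Ne.symm hjk)]
    rw [h1, h2]
    have h3 : ∏ i ∈ ({j, k} : Finset (Fin n))ᶜ,
        μ (if i = j then s else if i = k then t else Set.univ) = c := by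
      have : ∀ i ∈ ({j, k} : Finset (Fin n))ᶜ,
          μ (if i = j then s else if i = k then t else Set.univ) = μ Set.univ := by
        intro i hi
        simp only [Finset.mem_compl, Finset.mem_insert, Finset.mem_singleton, not_or] at hi
        rw [if_neg hi.1, if_neg hi.2]
      rw [Finset.prod_congr rfl this, Finset.prod_const]
      have hcard : ({j, k} : Finset (Fin n))ᶜ.card = n - 2 := by
        rw [Finset.card_compl, Finset.card_insert_of_notMem (by simpa using hjk),
          Finset.card_singleton, Fintype.card_fin]
      rw [hcard, hc]
    rw [h3]
    simp only [Measure.smul_apply, smul_eq_mul]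
    ring
  have h4 : Measure.pi (fun _ : Fin n => μ) ((fun x => (x j, x k)) ⁻¹' N)
      = ((c • μ).prod μ) N := by
    rw [← hmap, Measure.map_apply hmeas hN]
  rw [h4, Measure.prod_apply hN, lintegral_smul_measure, ← Measure.prod_apply hN, hN0,
    smul_zero]

/-- Splitting the S-product at the lowest index. -/
lemma split_S {n : ℕ} (m : ℕ) (h : (Fin n × Fin n) → ℝ≥0∞) :
    ∏ jk ∈ univ.filter (fun jk : Fin n × Fin n => m ≤ jk.1.val ∧ jk.1 < jk.2), h jk
      = (∏ jk ∈ univ.filter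
            (fun jk : Fin n × Fin n => jk.1.val = m ∧ m + 1 ≤ jk.2.val), h jk) *
        ∏ jk ∈ univ.filter
            (fun jk : Fin n × Fin n => m + 1 ≤ jk.1.val ∧ jk.1 < jk.2), h jk := by
  classical
  rw [← Finset.prod_filter_mul_prod_filter_not
    (univ.filter (fun jk : Fin n × Fin n => m ≤ jk.1.val ∧ jk.1 < jk.2))
    (fun jk => jk.1.val = m) h]
  congr 1
  · apply Finset.prod_congr _ (fun _ _ => rfl)
    rw [Finset.filter_filter]
    apply Finset.filter_congr
    intro jk _
    simp only [Fin.lt_def]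
    constructor
    · rintro ⟨⟨_, h2⟩, h3⟩; omega
    · rintro ⟨h1, h2⟩; omega
  · apply Finset.prod_congr _ (fun _ _ => rfl)
    rw [Finset.filter_filter]
    apply Finset.filter_congr
    intro jk _
    simp only [Fin.lt_def]
    omega

/-- Splitting the Q-product at the top index. -/
lemma split_Q {n : ℕ} (m : ℕ) (h : (Fin n × Fin n) → ℝ≥0∞) :
    ∏ jk ∈ univ.filter (fun jk : Fin n × Fin n => jk.1.val < m ∧ m ≤ jk.2.val), h jk
      = (∏ jk ∈ univ.filter
            (fun jk : Fin n × Fin n => jk.1.val < m ∧ jk.2.val = m), h jk) *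
        ∏ jk ∈ univ.filter
            (fun jk : Fin n × Fin n => jk.1.val < m ∧ m + 1 ≤ jk.2.val), h jk := by
  classical
  rw [← Finset.prod_filter_mul_prod_filter_not
    (univ.filter (fun jk : Fin n × Fin n => jk.1.val < m ∧ m ≤ jk.2.val))
    (fun jk => jk.2.val = m) h]
  congr 1
  · apply Finset.prod_congr _ (fun _ _ => rfl)
    rw [Finset.filter_filter]
    apply Finset.filter_congr
    intro jk _
    omega
  · apply Finset.prod_congr _ (fun _ _ => rfl)
    rw [Finset.filter_filter]
    apply Finset.filter_congr
    intro jk _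
    omega

/-- Splitting the Q-product (at level `m+1`) at the lowest index. -/
lemma split_Q' {n : ℕ} (m : ℕ) (h : (Fin n × Fin n) → ℝ≥0∞) :
    ∏ jk ∈ univ.filter (fun jk : Fin n × Fin n => jk.1.val < m + 1 ∧ m + 1 ≤ jk.2.val), h jk
      = (∏ jk ∈ univ.filter
            (fun jk : Fin n × Fin n => jk.1.val = m ∧ m + 1 ≤ jk.2.val), h jk) *
        ∏ jk ∈ univ.filter
            (fun jk : Fin n × Fin n => jk.1.val < m ∧ m + 1 ≤ jk.2.val), h jk := by
  classical
  rw [← Finset.prod_filter_mul_prod_filter_not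
    (univ.filter (fun jk : Fin n × Fin n => jk.1.val < m + 1 ∧ m + 1 ≤ jk.2.val))
    (fun jk => jk.1.val = m) h]
  congr 1
  · apply Finset.prod_congr _ (fun _ _ => rfl)
    rw [Finset.filter_filter]
    apply Finset.filter_congr
    intro jk _
    omega
  · apply Finset.prod_congr _ (fun _ _ => rfl)
    rw [Finset.filter_filter]
    apply Finset.filter_congr
    intro jk _
    omega

lemma reindex_pairs_fst {n m : ℕ} (hm : m < n) (u : Fin n → ℝ≥0∞) :
    ∏ jk ∈ univ.filter (fun jk : Fin n × Fin n => jk.1.val = m ∧ m + 1 ≤ jk.2.val), u jk.2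
      = ∏ i ∈ univ.filter (fun i : Fin n => m < i.val), u i := by
  classical
  refine Finset.prod_nbij' (fun jk => jk.2) (fun i => (⟨m, hm⟩, i)) ?_ ?_ ?_ ?_ ?_
  · intro jk hjk; simp only [Finset.mem_filter, Finset.mem_univ, true_and] at hjk ⊢; omega
  · intro i hi
    simp only [Finset.mem_filter, Finset.mem_univ, true_and, and_true] at hi ⊢
    omega
  · intro jk hjk
    simp only [Finset.mem_filter, Finset.mem_univ, true_and] at hjk
    have h1 : (⟨m, hm⟩ : Fin n) = jk.1 := Fin.ext hjk.1.symm
    exact Prod.ext h1 rfl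
  · intro i hi; rfl
  · intro jk hjk; rfl

lemma reindex_pairs_snd {n m : ℕ} (hm : m < n) (u : Fin n → ℝ≥0∞) :
    ∏ jk ∈ univ.filter (fun jk : Fin n × Fin n => jk.1.val < m ∧ jk.2.val = m), u jk.1
      = ∏ i ∈ univ.filter (fun i : Fin n => i.val < m), u i := by
  classical
  refine Finset.prod_nbij' (fun jk => jk.1) (fun i => (i, ⟨m, hm⟩)) ?_ ?_ ?_ ?_ ?_
  · intro jk hjk; simp only [Finset.mem_filter, Finset.mem_univ, true_and] at hjk ⊢; omega
  · intro i hi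
    simp only [Finset.mem_filter, Finset.mem_univ, true_and, and_true] at hi ⊢
    omega
  · intro jk hjk
    simp only [Finset.mem_filter, Finset.mem_univ, true_and] at hjk
    have h2 : (⟨m, hm⟩ : Fin n) = jk.2 := Fin.ext hjk.2.symm
    exact Prod.ext rfl h2
  · intro i hi; rfl
  · intro jk hjk; rfl

lemma split_coords {n m : ℕ} (u : Fin n → ℝ≥0∞) :
    ∏ i ∈ univ.filter (fun i : Fin n => i.val ≠ m), u i
      = (∏ i ∈ univ.filter (fun i : Fin n => m < i.val), u i) *
        ∏ i ∈ univ.filter (fun i : Fin n => i.val < m), u i := by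
  classical
  rw [← Finset.prod_filter_mul_prod_filter_not
    (univ.filter (fun i : Fin n => i.val ≠ m)) (fun i => m < i.val) u]
  congr 1
  · apply Finset.prod_congr _ (fun _ _ => rfl)
    rw [Finset.filter_filter]
    apply Finset.filter_congr
    intro i _
    omega
  · apply Finset.prod_congr _ (fun _ _ => rfl)
    rw [Finset.filter_filter]
    apply Finset.filter_congr
    intro i _
    omega

end Aux

section Main

open Finset

variable {X : Type*} [MeasurableSpace X]

/-- The inductive form of the geometric Brascamp–Lieb (Finner) inequality. -/
lemma finner_aux (μ : Measure X) [SigmaFinite μ]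
    (n : ℕ) (r : ℝ) (hr0 : 0 ≤ r) (hr1 : ((n : ℝ) - 1) * r = 1) :
    ∀ (d m : ℕ), m + d = n →
    ∀ (F : Fin n → Fin n → X → X → ℝ≥0∞) (G : Fin n → Fin n → X → ℝ≥0∞),
    (∀ j k, Measurable (Function.uncurry (F j k))) →
    (∀ j k, Measurable (G j k)) →
    (∀ j k, (∫⁻ z, ∫⁻ y, F j k y z ∂μ ∂μ) ≠ ∞) →
    (∀ j k, (∫⁻ z, G j k z ∂μ) ≠ ∞) →
    ∀ x : Fin n → X,
    (∫⋯∫⁻_(univ.filter fun i : Fin n => m ≤ i.val),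
      (fun y => (∏ jk ∈ univ.filter
            (fun jk : Fin n × Fin n => m ≤ jk.1.val ∧ jk.1 < jk.2),
            F jk.1 jk.2 (y jk.1) (y jk.2) ^ r) *
          ∏ jk ∈ univ.filter
            (fun jk : Fin n × Fin n => jk.1.val < m ∧ m ≤ jk.2.val),
            G jk.1 jk.2 (y jk.2) ^ r) ∂(fun _ => μ)) x
    ≤ (∏ jk ∈ univ.filter
          (fun jk : Fin n × Fin n => m ≤ jk.1.val ∧ jk.1 < jk.2),
          (∫⁻ z, ∫⁻ y, F jk.1 jk.2 y z ∂μ ∂μ) ^ r) *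
        ∏ jk ∈ univ.filter
          (fun jk : Fin n × Fin n => jk.1.val < m ∧ m ≤ jk.2.val),
          (∫⁻ z, G jk.1 jk.2 z ∂μ) ^ r := by
  classical
  intro d
  induction d with
  | zero =>
    intro m hmn F G hFm hGm hFfin hGfin x
    have hS : univ.filter (fun jk : Fin n × Fin n => m ≤ jk.1.val ∧ jk.1 < jk.2) = ∅ := by
      refine Finset.eq_empty_of_forall_notMem fun jk hjk => ?_
      simp only [Finset.mem_filter, Finset.mem_univ, true_and, Fin.lt_def] at hjk
      have := jk.2.isLt
      omega
    have hQ : univ.filter (fun jk : Fin n × Fin n => jk.1.val < m ∧ m ≤ jk.2.val) = ∅ := by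
      refine Finset.eq_empty_of_forall_notMem fun jk hjk => ?_
      simp only [Finset.mem_filter, Finset.mem_univ, true_and] at hjk
      have := jk.2.isLt
      omega
    have hA : univ.filter (fun i : Fin n => m ≤ i.val) = ∅ := by
      refine Finset.eq_empty_of_forall_notMem fun i hi => ?_
      simp only [Finset.mem_filter, Finset.mem_univ, true_and] at hi
      have := i.isLt
      omega
    rw [hS, hQ, hA]
    simp [MeasureTheory.lmarginal_empty]
  | succ d IH =>
    intro m hmn F G hFm hGm hFfin hGfin x
    have hm : m < n := by omega
    set m₀ : Fin n := ⟨m, hm⟩ with hm₀def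
    -- the new one-variable functions
    set G' : Fin n → Fin n → X → ℝ≥0∞ :=
      fun j k z => if j.val = m then ∫⁻ t, F j k t z ∂μ else G j k z with hG'def
    have hG'eq1 : ∀ (j k : Fin n) (z : X), j.val = m →
        G' j k z = ∫⁻ t, F j k t z ∂μ := by
      intro j k z h
      simp only [hG'def]
      exact if_pos h
    have hG'eq2 : ∀ (j k : Fin n) (z : X), j.val ≠ m → G' j k z = G j k z := by
      intro j k z h
      simp only [hG'def]
      exact if_neg h
    have hG'm : ∀ j k, Measurable (G' j k) := by
      intro j k
      by_cases h : j.val = m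
      · have : G' j k = fun z => ∫⁻ t, F j k t z ∂μ := funext fun z => hG'eq1 j k z h
        rw [this]
        exact (hFm j k).lintegral_prod_left
      · have : G' j k = G j k := funext fun z => hG'eq2 j k z h
        rw [this]
        exact hGm j k
    have hG'fin : ∀ j k, (∫⁻ z, G' j k z ∂μ) ≠ ∞ := by
      intro j k
      by_cases h : j.val = m
      · have : (∫⁻ z, G' j k z ∂μ) = ∫⁻ z, ∫⁻ t, F j k t z ∂μ ∂μ := by
          apply lintegral_congr
          intro z
          exact hG'eq1 j k z h
        rw [this]
        exact hFfin j k
      · have : (∫⁻ z, G' j k z ∂μ) = ∫⁻ z, G j k z ∂μ := by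
          apply lintegral_congr
          intro z
          exact hG'eq2 j k z h
        rw [this]
        exact hGfin j k
    -- the integrand and its measurability
    set f : (Fin n → X) → ℝ≥0∞ :=
      fun y => (∏ jk ∈ univ.filter
            (fun jk : Fin n × Fin n => m ≤ jk.1.val ∧ jk.1 < jk.2),
            F jk.1 jk.2 (y jk.1) (y jk.2) ^ r) *
          ∏ jk ∈ univ.filter
            (fun jk : Fin n × Fin n => jk.1.val < m ∧ m ≤ jk.2.val),
            G jk.1 jk.2 (y jk.2) ^ r with hfdef
    have hf : Measurable f := by
      apply Measurable.mul
      · apply Finset.measurable_prod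
        intro jk _
        have h2 : Measurable fun y : Fin n → X => (y jk.1, y jk.2) :=
          (measurable_pi_apply jk.1).prodMk (measurable_pi_apply jk.2)
        have h1 : Measurable fun y : Fin n → X => F jk.1 jk.2 (y jk.1) (y jk.2) :=
          (hFm jk.1 jk.2).comp h2
        exact h1.pow_const r
      · apply Finset.measurable_prod
        intro jk _
        exact (Measurable.comp' (hGm jk.1 jk.2) (measurable_pi_apply jk.2)).pow_const r
    set g : (Fin n → X) → ℝ≥0∞ :=
      fun y => (∏ jk ∈ univ.filter
            (fun jk : Fin n × Fin n => m + 1 ≤ jk.1.val ∧ jk.1 < jk.2),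
            F jk.1 jk.2 (y jk.1) (y jk.2) ^ r) *
          ∏ jk ∈ univ.filter
            (fun jk : Fin n × Fin n => jk.1.val < m + 1 ∧ m + 1 ≤ jk.2.val),
            G' jk.1 jk.2 (y jk.2) ^ r with hgdef
    have hg : Measurable g := by
      apply Measurable.mul
      · apply Finset.measurable_prod
        intro jk _
        have h2 : Measurable fun y : Fin n → X => (y jk.1, y jk.2) :=
          (measurable_pi_apply jk.1).prodMk (measurable_pi_apply jk.2)
        have h1 : Measurable fun y : Fin n → X => F jk.1 jk.2 (y jk.1) (y jk.2) :=
          (hFm jk.1 jk.2).comp h2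
        exact h1.pow_const r
      · apply Finset.measurable_prod
        intro jk _
        exact (Measurable.comp' (hG'm jk.1 jk.2) (measurable_pi_apply jk.2)).pow_const r
    set K : ℝ≥0∞ :=
      ∏ i ∈ univ.filter (fun i : Fin n => i.val < m), (∫⁻ z, G i m₀ z ∂μ) ^ r with hKdef
    -- rewrite the marginal set
    have hset : univ.filter (fun i : Fin n => m ≤ i.val)
        = insert m₀ (univ.filter (fun i : Fin n => m + 1 ≤ i.val)) := by
      ext i
      simp only [Finset.mem_filter, Finset.mem_univ, true_and, Finset.mem_insert,
        Fin.ext_iff, hm₀def, Fin.val_mk]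
      omega
    have hm₀notin : m₀ ∉ univ.filter (fun i : Fin n => m + 1 ≤ i.val) := by
      simp [hm₀def]
    -- the key pointwise bound
    have key : ∀ y : Fin n → X, (∫⁻ t, f (Function.update y m₀ t) ∂μ) ≤ K * g y := by
      intro y
      -- rewrite the integrand
      have hfy : ∀ t : X, f (Function.update y m₀ t)
          = ((∏ jk ∈ univ.filter
              (fun jk : Fin n × Fin n => m + 1 ≤ jk.1.val ∧ jk.1 < jk.2),
              F jk.1 jk.2 (y jk.1) (y jk.2) ^ r) *
            ∏ jk ∈ univ.filter
              (fun jk : Fin n × Fin n => jk.1.val < m ∧ m + 1 ≤ jk.2.val),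
              G jk.1 jk.2 (y jk.2) ^ r) *
            ((∏ jk ∈ univ.filter
              (fun jk : Fin n × Fin n => jk.1.val = m ∧ m + 1 ≤ jk.2.val),
              F jk.1 jk.2 t (y jk.2) ^ r) *
            ∏ jk ∈ univ.filter
              (fun jk : Fin n × Fin n => jk.1.val < m ∧ jk.2.val = m),
              G jk.1 jk.2 t ^ r) := by
        intro t
        simp only [hfdef]
        rw [split_S m, split_Q m]
        have e1 : ∏ jk ∈ univ.filter
            (fun jk : Fin n × Fin n => jk.1.val = m ∧ m + 1 ≤ jk.2.val),
            F jk.1 jk.2 (Function.update y m₀ t jk.1) (Function.update y m₀ t jk.2) ^ r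
            = ∏ jk ∈ univ.filter
            (fun jk : Fin n × Fin n => jk.1.val = m ∧ m + 1 ≤ jk.2.val),
            F jk.1 jk.2 t (y jk.2) ^ r := by
          apply Finset.prod_congr rfl
          intro jk hjk
          simp only [Finset.mem_filter, Finset.mem_univ, true_and] at hjk
          have h1 : jk.1 = m₀ := Fin.ext hjk.1
          have h2 : jk.2 ≠ m₀ := by
            intro h
            have := congrArg Fin.val h
            simp only [hm₀def] at this
            omega
          rw [h1, Function.update_self, Function.update_of_ne h2]
        have e2 : ∏ jk ∈ univ.filter
            (fun jk : Fin n × Fin n => m + 1 ≤ jk.1.val ∧ jk.1 < jk.2),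
            F jk.1 jk.2 (Function.update y m₀ t jk.1) (Function.update y m₀ t jk.2) ^ r
            = ∏ jk ∈ univ.filter
            (fun jk : Fin n × Fin n => m + 1 ≤ jk.1.val ∧ jk.1 < jk.2),
            F jk.1 jk.2 (y jk.1) (y jk.2) ^ r := by
          apply Finset.prod_congr rfl
          intro jk hjk
          simp only [Finset.mem_filter, Finset.mem_univ, true_and, Fin.lt_def] at hjk
          have h1 : jk.1 ≠ m₀ := by
            intro h
            have := congrArg Fin.val h
            simp only [hm₀def] at this
            omega
          have h2 : jk.2 ≠ m₀ := by
            intro h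
            have := congrArg Fin.val h
            simp only [hm₀def] at this
            omega
          rw [Function.update_of_ne h1, Function.update_of_ne h2]
        have e3 : ∏ jk ∈ univ.filter
            (fun jk : Fin n × Fin n => jk.1.val < m ∧ jk.2.val = m),
            G jk.1 jk.2 (Function.update y m₀ t jk.2) ^ r
            = ∏ jk ∈ univ.filter
            (fun jk : Fin n × Fin n => jk.1.val < m ∧ jk.2.val = m),
            G jk.1 jk.2 t ^ r := by
          apply Finset.prod_congr rfl
          intro jk hjk
          simp only [Finset.mem_filter, Finset.mem_univ, true_and] at hjk
          have h2 : jk.2 = m₀ := Fin.ext hjk.2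
          rw [h2, Function.update_self]
        have e4 : ∏ jk ∈ univ.filter
            (fun jk : Fin n × Fin n => jk.1.val < m ∧ m + 1 ≤ jk.2.val),
            G jk.1 jk.2 (Function.update y m₀ t jk.2) ^ r
            = ∏ jk ∈ univ.filter
            (fun jk : Fin n × Fin n => jk.1.val < m ∧ m + 1 ≤ jk.2.val),
            G jk.1 jk.2 (y jk.2) ^ r := by
          apply Finset.prod_congr rfl
          intro jk hjk
          simp only [Finset.mem_filter, Finset.mem_univ, true_and] at hjk
          have h2 : jk.2 ≠ m₀ := by
            intro h
            have := congrArg Fin.val h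
            simp only [hm₀def] at this
            omega
          rw [Function.update_of_ne h2]
        rw [e1, e2, e3, e4]
        ring
      simp_rw [hfy]
      have hHmeas : Measurable fun t : X =>
          (∏ jk ∈ univ.filter
              (fun jk : Fin n × Fin n => jk.1.val = m ∧ m + 1 ≤ jk.2.val),
              F jk.1 jk.2 t (y jk.2) ^ r) *
            ∏ jk ∈ univ.filter
              (fun jk : Fin n × Fin n => jk.1.val < m ∧ jk.2.val = m),
              G jk.1 jk.2 t ^ r := by
        apply Measurable.mul
        · apply Finset.measurable_prod
          intro jk _
          exact (Measurable.comp' (hFm jk.1 jk.2)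
            (measurable_id.prodMk measurable_const)).pow_const r
        · apply Finset.measurable_prod
          intro jk _
          exact (hGm jk.1 jk.2).pow_const r
      rw [lintegral_const_mul _ hHmeas]
      -- identify the inner product as a product over all coordinates except m
      have hH : ∀ t : X,
          (∏ jk ∈ univ.filter
              (fun jk : Fin n × Fin n => jk.1.val = m ∧ m + 1 ≤ jk.2.val),
              F jk.1 jk.2 t (y jk.2) ^ r) *
            ∏ jk ∈ univ.filter
              (fun jk : Fin n × Fin n => jk.1.val < m ∧ jk.2.val = m),
              G jk.1 jk.2 t ^ r
          = ∏ i ∈ univ.filter (fun i : Fin n => i.val ≠ m),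
              (if m < i.val then F m₀ i t (y i) else G i m₀ t) ^ r := by
        intro t
        rw [split_coords (fun i => (if m < i.val then F m₀ i t (y i) else G i m₀ t) ^ r)]
        congr 1
        · refine Eq.trans (Finset.prod_congr rfl ?_)
            (reindex_pairs_fst hm
              (fun i => (if m < i.val then F m₀ i t (y i) else G i m₀ t) ^ r))
          intro jk hjk
          simp only [Finset.mem_filter, Finset.mem_univ, true_and] at hjk
          have h1 : jk.1 = m₀ := Fin.ext hjk.1
          show F jk.1 jk.2 t (y jk.2) ^ r
            = (if m < jk.2.val then F m₀ jk.2 t (y jk.2) else G jk.2 m₀ t) ^ r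
          rw [h1, if_pos (show m < jk.2.val by omega)]
        · refine Eq.trans (Finset.prod_congr rfl ?_)
            (reindex_pairs_snd hm
              (fun i => (if m < i.val then F m₀ i t (y i) else G i m₀ t) ^ r))
          intro jk hjk
          simp only [Finset.mem_filter, Finset.mem_univ, true_and] at hjk
          have h2 : jk.2 = m₀ := Fin.ext hjk.2
          show G jk.1 jk.2 t ^ r
            = (if m < jk.1.val then F m₀ jk.1 t (y jk.1) else G jk.1 m₀ t) ^ r
          rw [h2, if_neg (show ¬ m < jk.1.val by omega)]
      simp_rw [hH]
      -- apply Hölder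
      have hcard : (univ.filter (fun i : Fin n => i.val ≠ m)).card = n - 1 := by
        have heq : univ.filter (fun i : Fin n => i.val ≠ m) = univ.erase m₀ := by
          ext i
          simp [Fin.ext_iff, hm₀def]
        rw [heq, Finset.card_erase_of_mem (Finset.mem_univ _), Finset.card_univ,
          Fintype.card_fin]
      have hsum : ∑ _i ∈ univ.filter (fun i : Fin n => i.val ≠ m), r = 1 := by
        rw [Finset.sum_const, hcard, nsmul_eq_mul, Nat.cast_sub (by omega), Nat.cast_one]
        exact hr1
      have hholder :
          ∫⁻ t, ∏ i ∈ univ.filter (fun i : Fin n => i.val ≠ m),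
              (if m < i.val then F m₀ i t (y i) else G i m₀ t) ^ r ∂μ
            ≤ ∏ i ∈ univ.filter (fun i : Fin n => i.val ≠ m),
              (∫⁻ t, (if m < i.val then F m₀ i t (y i) else G i m₀ t) ∂μ) ^ r := by
        refine ENNReal.lintegral_prod_norm_pow_le _ (fun i _ => ?_) hsum (fun i _ => hr0)
        by_cases h : m < i.val
        · simp only [h, if_true]
          exact (Measurable.comp' (hFm m₀ i)
            (measurable_id.prodMk measurable_const)).aemeasurable
        · simp only [h, if_false]
          exact (hGm i m₀).aemeasurable
      refine le_trans (mul_le_mul_right hholder _) (le_of_eq ?_)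
      rw [split_coords (fun i =>
        (∫⁻ t, (if m < i.val then F m₀ i t (y i) else G i m₀ t) ∂μ) ^ r)]
      have e5 : ∏ i ∈ univ.filter (fun i : Fin n => m < i.val),
          (∫⁻ t, (if m < i.val then F m₀ i t (y i) else G i m₀ t) ∂μ) ^ r
          = ∏ i ∈ univ.filter (fun i : Fin n => m < i.val),
          (∫⁻ t, F m₀ i t (y i) ∂μ) ^ r := by
        apply Finset.prod_congr rfl
        intro i hi
        simp only [Finset.mem_filter, Finset.mem_univ, true_and] at hi
        simp only [hi, if_true]
      have e6 : ∏ i ∈ univ.filter (fun i : Fin n => i.val < m),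
          (∫⁻ t, (if m < i.val then F m₀ i t (y i) else G i m₀ t) ∂μ) ^ r
          = K := by
        rw [hKdef]
        apply Finset.prod_congr rfl
        intro i hi
        simp only [Finset.mem_filter, Finset.mem_univ, true_and] at hi
        have h : ¬ m < i.val := by omega
        simp only [h, if_false]
      rw [e5, e6]
      -- identify with K * g y
      simp only [hgdef]
      have e7 : ∏ jk ∈ univ.filter
          (fun jk : Fin n × Fin n => jk.1.val < m + 1 ∧ m + 1 ≤ jk.2.val),
          G' jk.1 jk.2 (y jk.2) ^ r
          = (∏ i ∈ univ.filter (fun i : Fin n => m < i.val),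
              (∫⁻ t, F m₀ i t (y i) ∂μ) ^ r) *
            ∏ jk ∈ univ.filter
              (fun jk : Fin n × Fin n => jk.1.val < m ∧ m + 1 ≤ jk.2.val),
              G jk.1 jk.2 (y jk.2) ^ r := by
        rw [split_Q' m]
        congr 1
        · refine Eq.trans (Finset.prod_congr rfl ?_)
            (reindex_pairs_fst hm (fun i => (∫⁻ t, F m₀ i t (y i) ∂μ) ^ r))
          intro jk hjk
          simp only [Finset.mem_filter, Finset.mem_univ, true_and] at hjk
          have h1 : jk.1 = m₀ := Fin.ext hjk.1
          show G' jk.1 jk.2 (y jk.2) ^ r = (∫⁻ t, F m₀ jk.2 t (y jk.2) ∂μ) ^ r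
          rw [hG'eq1 jk.1 jk.2 (y jk.2) hjk.1, h1]
        · apply Finset.prod_congr rfl
          intro jk hjk
          simp only [Finset.mem_filter, Finset.mem_univ, true_and] at hjk
          rw [hG'eq2 jk.1 jk.2 (y jk.2) (by omega)]
      rw [e7]
      ring
    -- put the steps together
    calc (∫⋯∫⁻_(univ.filter fun i : Fin n => m ≤ i.val), f ∂(fun _ => μ)) x
        = (∫⋯∫⁻_(insert m₀ (univ.filter fun i : Fin n => m + 1 ≤ i.val)),
            f ∂(fun _ => μ)) x := by rw [hset]
      _ = (∫⋯∫⁻_(univ.filter fun i : Fin n => m + 1 ≤ i.val),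
            (fun y => ∫⁻ t, f (Function.update y m₀ t) ∂μ) ∂(fun _ => μ)) x := by
            rw [MeasureTheory.lmarginal_insert' f hf hm₀notin]
      _ ≤ (∫⋯∫⁻_(univ.filter fun i : Fin n => m + 1 ≤ i.val),
            (fun y => K * g y) ∂(fun _ => μ)) x :=
            MeasureTheory.lmarginal_mono (fun y => key y) x
      _ = K * (∫⋯∫⁻_(univ.filter fun i : Fin n => m + 1 ≤ i.val), g ∂(fun _ => μ)) x := by
            simp only [MeasureTheory.lmarginal]
            exact lintegral_const_mul K (hg.comp measurable_updateFinset)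
      _ ≤ K * ((∏ jk ∈ univ.filter
            (fun jk : Fin n × Fin n => m + 1 ≤ jk.1.val ∧ jk.1 < jk.2),
            (∫⁻ z, ∫⁻ y, F jk.1 jk.2 y z ∂μ ∂μ) ^ r) *
          ∏ jk ∈ univ.filter
            (fun jk : Fin n × Fin n => jk.1.val < m + 1 ∧ m + 1 ≤ jk.2.val),
            (∫⁻ z, G' jk.1 jk.2 z ∂μ) ^ r) :=
            mul_le_mul_right (IH (m + 1) (by omega) F G' hFm hG'm hFfin hG'fin x) K
      _ = (∏ jk ∈ univ.filter
            (fun jk : Fin n × Fin n => m ≤ jk.1.val ∧ jk.1 < jk.2),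
            (∫⁻ z, ∫⁻ y, F jk.1 jk.2 y z ∂μ ∂μ) ^ r) *
          ∏ jk ∈ univ.filter
            (fun jk : Fin n × Fin n => jk.1.val < m ∧ m ≤ jk.2.val),
            (∫⁻ z, G jk.1 jk.2 z ∂μ) ^ r := by
            rw [split_S m (fun jk => (∫⁻ z, ∫⁻ y, F jk.1 jk.2 y z ∂μ ∂μ) ^ r),
              split_Q m (fun jk => (∫⁻ z, G jk.1 jk.2 z ∂μ) ^ r)]
            have e8 : ∏ jk ∈ univ.filter
                (fun jk : Fin n × Fin n => jk.1.val < m + 1 ∧ m + 1 ≤ jk.2.val),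
                (∫⁻ z, G' jk.1 jk.2 z ∂μ) ^ r
                = (∏ jk ∈ univ.filter
                    (fun jk : Fin n × Fin n => jk.1.val = m ∧ m + 1 ≤ jk.2.val),
                    (∫⁻ z, ∫⁻ y, F jk.1 jk.2 y z ∂μ ∂μ) ^ r) *
                  ∏ jk ∈ univ.filter
                    (fun jk : Fin n × Fin n => jk.1.val < m ∧ m + 1 ≤ jk.2.val),
                    (∫⁻ z, G jk.1 jk.2 z ∂μ) ^ r := by
              rw [split_Q' m]
              congr 1
              · apply Finset.prod_congr rfl
                intro jk hjk
                simp only [Finset.mem_filter, Finset.mem_univ, true_and] at hjk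
                congr 1
                apply lintegral_congr
                intro z
                exact hG'eq1 jk.1 jk.2 z hjk.1
              · apply Finset.prod_congr rfl
                intro jk hjk
                simp only [Finset.mem_filter, Finset.mem_univ, true_and] at hjk
                congr 1
                apply lintegral_congr
                intro z
                exact hG'eq2 jk.1 jk.2 z (by omega)
            have e9 : ∏ jk ∈ univ.filter
                (fun jk : Fin n × Fin n => jk.1.val < m ∧ jk.2.val = m),
                (∫⁻ z, G jk.1 jk.2 z ∂μ) ^ r = K := by
              rw [hKdef, ← reindex_pairs_snd hm (fun i => (∫⁻ z, G i m₀ z ∂μ) ^ r)]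
              apply Finset.prod_congr rfl
              intro jk hjk
              simp only [Finset.mem_filter, Finset.mem_univ, true_and] at hjk
              have h2 : jk.2 = m₀ := Fin.ext hjk.2
              rw [h2]
            rw [e8, e9]
            ring

end Main

/-- geometric Brascamp–Lieb / Finner inequality on the torus:
for every integer `p ≥ 1` there is `C = C(p) > 0` such that for every family of integrable
functions `f_{j,k} : 𝕋² × 𝕋² → ℝ` indexed by pairs `j < k` in `{1,…,2p}`,
`∫_{(𝕋²)^{2p}} ∏_{j<k} |f_{j,k}(x_j,x_k)|^{1/(2p−1)} dx
  ≤ C ∏_{j<k} (∫_{𝕋²×𝕋²} |f_{j,k}|)^{1/(2p−1)}`. -/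
theorem geometric_brascamp_lieb_torus (p : ℕ) (hp : 1 ≤ p) :
    ∃ C : ℝ, 0 < C ∧
      ∀ f : Fin (2 * p) → Fin (2 * p) → Torus2 × Torus2 → ℝ,
        (∀ j k : Fin (2 * p), j < k → Integrable (f j k)) →
        (∫⁻ x : Fin (2 * p) → Torus2,
            ∏ jk ∈ Finset.univ.filter (fun jk : Fin (2 * p) × Fin (2 * p) => jk.1 < jk.2),
              ENNReal.ofReal |f jk.1 jk.2 (x jk.1, x jk.2)| ^
                ((1 : ℝ) / (2 * (p : ℝ) - 1)))
          ≤ ENNReal.ofReal C *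
            ∏ jk ∈ Finset.univ.filter (fun jk : Fin (2 * p) × Fin (2 * p) => jk.1 < jk.2),
              (∫⁻ yz : Torus2 × Torus2, ENNReal.ofReal |f jk.1 jk.2 yz|) ^
                ((1 : ℝ) / (2 * (p : ℝ) - 1)) := by
  classical
  refine ⟨1, one_pos, fun f hf => ?_⟩
  rw [ENNReal.ofReal_one, one_mul]
  set r : ℝ := (1 : ℝ) / (2 * (p : ℝ) - 1) with hr
  have hp1 : (1 : ℝ) ≤ (p : ℝ) := by exact_mod_cast hp
  have hpos : (0 : ℝ) < 2 * (p : ℝ) - 1 := by linarith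
  have hr0 : 0 ≤ r := by
    rw [hr]
    positivity
  have hr1 : (((2 * p : ℕ) : ℝ) - 1) * r = 1 := by
    rw [hr]
    push_cast
    field_simp
  -- measurable representatives
  have haem : ∀ j k : Fin (2 * p), j < k →
      AEMeasurable (fun yz : Torus2 × Torus2 => ENNReal.ofReal |f j k yz|)
        (volume : Measure (Torus2 × Torus2)) := by
    intro j k hjk
    exact ENNReal.measurable_ofReal.comp_aemeasurable
      (continuous_abs.measurable.comp_aemeasurable (hf j k hjk).aemeasurable)
  set F : Fin (2 * p) → Fin (2 * p) → Torus2 → Torus2 → ℝ≥0∞ :=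
    fun j k y z => if h : j < k then (haem j k h).mk _ (y, z) else 0 with hFdef
  set G : Fin (2 * p) → Fin (2 * p) → Torus2 → ℝ≥0∞ := fun _ _ _ => 0 with hGdef
  have hFuncurry : ∀ (j k : Fin (2 * p)) (h : j < k),
      Function.uncurry (F j k) = (haem j k h).mk _ := by
    intro j k h
    funext yz
    show F j k yz.1 yz.2 = _
    rw [hFdef]
    simp only [dif_pos h]
  have hFm : ∀ j k, Measurable (Function.uncurry (F j k)) := by
    intro j k
    by_cases h : j < k
    · rw [hFuncurry j k h]
      exact (haem j k h).measurable_mk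
    · have : Function.uncurry (F j k) = fun _ => 0 := by
        funext yz
        show F j k yz.1 yz.2 = 0
        rw [hFdef]
        simp only [dif_neg h]
      rw [this]
      exact measurable_const
  have hGm : ∀ j k, Measurable (G j k) := fun _ _ => measurable_const
  have hGfin : ∀ j k, (∫⁻ z, G j k z ∂(volume : Measure Torus2)) ≠ ∞ := by
    intro j k
    simp [hGdef]
  -- the double integral identity
  have hdouble : ∀ (j k : Fin (2 * p)), j < k →
      (∫⁻ z, ∫⁻ y, F j k y z ∂(volume : Measure Torus2) ∂(volume : Measure Torus2))
        = ∫⁻ yz : Torus2 × Torus2, ENNReal.ofReal |f j k yz| := by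
    intro j k h
    have h1 : (∫⁻ yz : Torus2 × Torus2, Function.uncurry (F j k) yz)
        = ∫⁻ z, ∫⁻ y, F j k y z ∂(volume : Measure Torus2) ∂(volume : Measure Torus2) := by
      rw [MeasureTheory.Measure.volume_eq_prod]
      exact MeasureTheory.lintegral_prod_symm _ (hFm j k).aemeasurable
    rw [← h1]
    apply lintegral_congr_ae
    rw [hFuncurry j k h]
    exact ((haem j k h).ae_eq_mk).symm
  have hFfin : ∀ j k,
      (∫⁻ z, ∫⁻ y, F j k y z ∂(volume : Measure Torus2) ∂(volume : Measure Torus2)) ≠ ∞ := by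
    intro j k
    by_cases h : j < k
    · rw [hdouble j k h]
      have h2 : (∫⁻ yz : Torus2 × Torus2, ENNReal.ofReal |f j k yz|)
          = ∫⁻ yz : Torus2 × Torus2, (‖f j k yz‖₊ : ℝ≥0∞) := by
        apply lintegral_congr
        intro yz
        exact (Real.enorm_eq_ofReal_abs _).symm
      rw [h2]
      exact (hf j k h).2.ne
    · have : ∀ y z : Torus2, F j k y z = 0 := by
        intro y z
        rw [hFdef]
        simp only [dif_neg h]
      simp [this]
  -- replace the integrand by the measurable representative, a.e.
  have hae : ∀ᵐ x : Fin (2 * p) → Torus2 ∂(volume : Measure (Fin (2 * p) → Torus2)),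
      ∀ jk ∈ Finset.univ.filter (fun jk : Fin (2 * p) × Fin (2 * p) => jk.1 < jk.2),
        ENNReal.ofReal |f jk.1 jk.2 (x jk.1, x jk.2)| = F jk.1 jk.2 (x jk.1) (x jk.2) := by
    rw [Filter.eventually_all_finset]
    intro jk hjk
    simp only [Finset.mem_filter, Finset.mem_univ, true_and] at hjk
    have hne : jk.1 ≠ jk.2 := ne_of_lt hjk
    have hmk := (haem jk.1 jk.2 hjk).ae_eq_mk
    set s : Set (Torus2 × Torus2) :=
      {yz | ¬ (ENNReal.ofReal |f jk.1 jk.2 yz| = (haem jk.1 jk.2 hjk).mk _ yz)} with hs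
    have hs0 : (volume : Measure (Torus2 × Torus2)) s = 0 := hmk
    set N : Set (Torus2 × Torus2) := toMeasurable volume s with hN
    have hN0 : (volume : Measure (Torus2 × Torus2)) N = 0 := by
      rw [hN, measure_toMeasurable]
      exact hs0
    have hNmeas : MeasurableSet N := measurableSet_toMeasurable _ _
    have hpull : Measure.pi (fun _ : Fin (2 * p) => (volume : Measure Torus2))
        ((fun x : Fin (2 * p) → Torus2 => (x jk.1, x jk.2)) ⁻¹' N) = 0 := by
      refine pair_eval_null (volume : Measure Torus2) hne hNmeas ?_
      rw [← MeasureTheory.Measure.volume_eq_prod]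
      exact hN0
    have hpull' : (volume : Measure (Fin (2 * p) → Torus2))
        ((fun x : Fin (2 * p) → Torus2 => (x jk.1, x jk.2)) ⁻¹' N) = 0 := by
      rw [MeasureTheory.volume_pi]
      exact hpull
    refine (MeasureTheory.measure_mono_null ?_ hpull' : _)
    intro x hx
    simp only [Set.mem_setOf_eq] at hx
    simp only [Set.mem_preimage]
    apply subset_toMeasurable
    rw [hs]
    simp only [Set.mem_setOf_eq]
    intro hcontra
    apply hx
    show ENNReal.ofReal |f jk.1 jk.2 (x jk.1, x jk.2)| = F jk.1 jk.2 (x jk.1) (x jk.2)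
    rw [hcontra, hFdef]
    simp only [dif_pos hjk]
  have hLHS : (∫⁻ x : Fin (2 * p) → Torus2,
      ∏ jk ∈ Finset.univ.filter (fun jk : Fin (2 * p) × Fin (2 * p) => jk.1 < jk.2),
        ENNReal.ofReal |f jk.1 jk.2 (x jk.1, x jk.2)| ^ r)
      = ∫⁻ x : Fin (2 * p) → Torus2,
      ∏ jk ∈ Finset.univ.filter (fun jk : Fin (2 * p) × Fin (2 * p) => jk.1 < jk.2),
        F jk.1 jk.2 (x jk.1) (x jk.2) ^ r := by
    apply lintegral_congr_ae
    filter_upwards [hae] with x hx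
    exact Finset.prod_congr rfl fun jk hjk => by rw [hx jk hjk]
  rw [hLHS]
  -- apply the main inequality
  have hmain := finner_aux (volume : Measure Torus2) (2 * p) r hr0 hr1 (2 * p) 0 (by omega)
    F G hFm hGm hFfin hGfin (fun _ => 0)
  -- identify the filters
  have hfilter : Finset.univ.filter (fun jk : Fin (2 * p) × Fin (2 * p) => 0 ≤ jk.1.val ∧ jk.1 < jk.2)
      = Finset.univ.filter (fun jk : Fin (2 * p) × Fin (2 * p) => jk.1 < jk.2) := by
    apply Finset.filter_congr
    intro jk _
    simp
  have hQ0 : Finset.univ.filter (fun jk : Fin (2 * p) × Fin (2 * p) => jk.1.val < 0 ∧ 0 ≤ jk.2.val)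
      = ∅ := by
    refine Finset.eq_empty_of_forall_notMem fun jk hjk => ?_
    simp only [Finset.mem_filter, Finset.mem_univ, true_and] at hjk
    omega
  have hA0 : Finset.univ.filter (fun i : Fin (2 * p) => 0 ≤ i.val) = Finset.univ := by
    apply Finset.filter_true_of_mem
    intro i _
    omega
  rw [hfilter, hQ0, hA0] at hmain
  simp only [Finset.prod_empty, mul_one, MeasureTheory.lmarginal_univ] at hmain
  have hvol : (volume : Measure (Fin (2 * p) → Torus2)) = Measure.pi fun _ => volume :=
    MeasureTheory.volume_pi
  rw [← hvol] at hmain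
  refine le_trans hmain (le_of_eq ?_)
  apply Finset.prod_congr rfl
  intro jk hjk
  simp only [Finset.mem_filter, Finset.mem_univ, true_and] at hjk
  rw [hdouble jk.1 jk.2 hjk]
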